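/- For every prime power q > 5, there exists a non-cyclotomic orthomorphism over F_q; that is, there is an orthomorphism θ over F_q with θ(0) = 0 such that θ ∉ 𝒞_ℓ(q) for every ℓ < q−1 dividing q−1 (equivalently, 𝒟_{q−1}(q) is nonempty). -/

import Mathlib

/-- An orthomorphism over a finite field: a permutation `θ` such that
`x ↦ θ x - x` is also a permutation. -/
def IsOrthomorphism {F : Type*} [Field F] [Fintype F] (θ : F → F) : Prop :=
  Function.Bijective θ ∧ Function.Bijective (fun x => θ x - x)

/-- `θ ∈ 𝒞_k(q)`: a cyclotomic orthomorphism of index `k`, i.e. an orthomorphism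
with `θ 0 = 0` such that `θ(x)/x` is constant on cosets of the unique subgroup of
index `k` of `Fˣ` (which, for `k ∣ q - 1`, is the set of nonzero `k`-th powers). -/
def IsCycOrthomorphism {F : Type*} [Field F] [Fintype F] (k : ℕ) (θ : F → F) : Prop :=
  IsOrthomorphism θ ∧ θ 0 = 0 ∧
    ∀ x y : F, x ≠ 0 → y ≠ 0 → (∃ z : F, x = z ^ k * y) → θ x * y = θ y * x

/-- `θ ∈ 𝒟_k(q)`: a cyclotomic orthomorphism of least index `k`. -/
def IsLeastCycOrthomorphism {F : Type*} [Field F] [Fintype F] (k : ℕ) (θ : F → F) : Prop :=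
  IsCycOrthomorphism k θ ∧
    ∀ ℓ : ℕ, ℓ < k → ℓ ∣ Fintype.card F - 1 → ¬ IsCycOrthomorphism ℓ θ

lemma cyc_top {F : Type*} [Field F] [Fintype F] {θ : F → F}
    (h1 : IsOrthomorphism θ) (h0 : θ 0 = 0) :
    IsCycOrthomorphism (Fintype.card F - 1) θ := by
  refine ⟨h1, h0, ?_⟩
  rintro x y hx hy ⟨z, rfl⟩
  have hq1 : 1 < Fintype.card F := Fintype.one_lt_card
  have hz : z ≠ 0 := by
    rintro rfl
    rw [zero_pow (by omega), zero_mul] at hx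
    exact hx rfl
  rw [FiniteField.pow_card_sub_one_eq_one z hz, one_mul]

lemma lemA {F : Type*} [Field F] [Fintype F] (hq : 5 < Fintype.card F)
    (hnp : ¬ (Fintype.card F - 1).Prime) :
    ∃ θ : F → F, IsLeastCycOrthomorphism (Fintype.card F - 1) θ := by
  classical
  have hq1 : 1 < Fintype.card F := Fintype.one_lt_card
  set q := Fintype.card F with hqdef
  have hN6 : 6 ≤ q - 1 := by
    rcases Nat.lt_or_ge (q - 1) 6 with h | h
    · exfalso; apply hnp
      have : q - 1 = 5 := by omega
      rw [this]; norm_num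
    · exact h
  -- the index of the cycle length
  set k := (q - 1).minFac with hk
  have hkdvd : k ∣ q - 1 := Nat.minFac_dvd _
  have hkp : k.Prime := Nat.minFac_prime (by omega)
  set m := (q - 1) / k with hm
  have hmdvd : m ∣ q - 1 := Nat.div_dvd_of_dvd hkdvd
  have hmlt : m < q - 1 := Nat.div_lt_self (by omega) hkp.one_lt
  have hm3 : 3 ≤ m := by
    rcases eq_or_ne k 2 with h2 | h2
    · rw [hm, h2]; omega
    · have hk3 : 3 ≤ k := by
        have := hkp.two_le; omega
      have hle : k ≤ m := Nat.minFac_le_div (by omega) hnp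
      omega
  -- generator
  obtain ⟨g, hg⟩ := IsCyclic.exists_generator (α := Fˣ)
  have hog : orderOf g = q - 1 := by
    rw [orderOf_eq_card_of_forall_mem_zpowers hg, Nat.card_eq_fintype_card,
      Fintype.card_units]
  set μu := g ^ k with hμu
  have hoμ : orderOf μu = m := by
    rw [hμu, orderOf_pow, hog, Nat.gcd_eq_right hkdvd]
  set μ : F := (μu : F) with hμdef
  have hμ0 : μ ≠ 0 := Units.ne_zero μu
  have hμpow : ∀ n : ℕ, μ ^ n = ((μu ^ n : Fˣ) : F) := by
    intro n; rw [Units.val_pow_eq_pow_val]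
  have hupow1 : ∀ n : ℕ, μ ^ n = 1 → μu ^ n = 1 := by
    intro n h
    apply Units.ext
    rw [← hμpow n] at *
    simpa using h
  have hμ1 : μ ≠ 1 := by
    intro h
    have : μu ^ 1 = 1 := hupow1 1 (by simpa using h)
    have := orderOf_dvd_of_pow_eq_one this
    rw [hoμ] at this
    have := Nat.le_of_dvd one_pos this
    omega
  have hμsq : μ ^ 2 ≠ 1 := by
    intro h
    have := orderOf_dvd_of_pow_eq_one (hupow1 2 h)
    rw [hoμ] at this
    have := Nat.le_of_dvd two_pos this
    omega
  have h1μ : 1 - μ ≠ 0 := sub_ne_zero.mpr (Ne.symm hμ1)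
  -- choose s outside powers of μ
  set P : Finset F := (Finset.range m).image (fun n => μ ^ n) with hP
  obtain ⟨s, hs⟩ : ∃ s : F, s ∉ insert (0 : F) P := by
    by_contra h
    push_neg at h
    have hsub : (Finset.univ : Finset F) ⊆ insert 0 P := fun x _ => h x
    have hc := Finset.card_le_card hsub
    rw [Finset.card_univ] at hc
    have h1 : P.card ≤ m := le_trans Finset.card_image_le (by simp)
    have h2 : (insert (0:F) P).card ≤ P.card + 1 := Finset.card_insert_le _ _
    omega
  have hs0 : s ≠ 0 := by rintro rfl; exact hs (Finset.mem_insert_self _ _)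
  have hsP : ∀ n : ℕ, μ ^ n ≠ s := by
    intro n h
    apply hs
    have hmod : μ ^ n = μ ^ (n % m) := by
      rw [hμpow n, hμpow (n % m)]
      congr 1
      rw [← hoμ]
      exact (pow_mod_orderOf _ _).symm
    refine Finset.mem_insert_of_mem (Finset.mem_image.mpr ⟨n % m, Finset.mem_range.mpr (Nat.mod_lt _ (by omega)), ?_⟩)
    rw [← hmod, h]
  set t : F := -s with ht
  have ht0 : t ≠ 0 := neg_ne_zero.mpr hs0
  have htS : ∀ n : ℕ, t + μ ^ n ≠ 0 := by
    intro n h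
    exact hsP n (by rw [ht] at h; linear_combination h)
  set S : Set F := {x | ∃ n : ℕ, x = t + μ ^ n} with hSdef
  have h0S : (0 : F) ∉ S := by rintro ⟨n, hn⟩; exact htS n hn.symm
  set c : F := t * (1 - μ) with hc
  set σ : F → F := fun x => μ * x + c with hσ
  have hσval : ∀ n : ℕ, σ (t + μ ^ n) = t + μ ^ (n + 1) := by
    intro n
    rw [hσ]; simp only []
    rw [hc, pow_succ]; ring
  have hσS : ∀ {x : F}, x ∈ S → σ x ∈ S := by
    rintro x ⟨n, rfl⟩
    exact ⟨n + 1, hσval n⟩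
  have hσinj : ∀ x y : F, σ x = σ y → x = y := by
    intro x y h
    rw [hσ] at h; simp only [] at h
    have : μ * x = μ * y := by linear_combination h
    exact mul_left_cancel₀ hμ0 this
  set a : F := μ⁻¹ + 1 with ha
  have ha0 : a ≠ 0 := by
    intro h
    apply hμsq
    have hinv : μ⁻¹ = -1 := by rw [ha] at h; linear_combination h
    have : μ * μ⁻¹ = 1 := mul_inv_cancel₀ hμ0
    rw [hinv] at this
    have hμm : μ = -1 := by linear_combination -this
    rw [hμm]; ring
  set θ : F → F := fun x => if x ∈ S then a * σ x else a * x with hθ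
  -- injectivity of θ
  have hθinj : Function.Injective θ := by
    intro x y hxy
    rw [hθ] at hxy; simp only [] at hxy
    by_cases hx : x ∈ S <;> by_cases hy : y ∈ S
    · rw [if_pos hx, if_pos hy] at hxy
      exact hσinj _ _ (mul_left_cancel₀ ha0 hxy)
    · rw [if_pos hx, if_neg hy] at hxy
      exact absurd (mul_left_cancel₀ ha0 hxy ▸ hσS hx) hy
    · rw [if_neg hx, if_pos hy] at hxy
      exact absurd ((mul_left_cancel₀ ha0 hxy).symm ▸ hσS hy) hx
    · rw [if_neg hx, if_neg hy] at hxy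
      exact mul_left_cancel₀ ha0 hxy
  have hθbij : Function.Bijective θ := Finite.injective_iff_bijective.mp hθinj
  have hθ0 : θ 0 = 0 := by rw [hθ]; simp only []; rw [if_neg h0S, mul_zero]
  -- difference map
  have hrel : (a - 1) * μ = 1 := by
    rw [ha]
    field_simp
    ring
  have ha1 : a - 1 ≠ 0 := by
    intro h
    rw [h, zero_mul] at hrel
    exact zero_ne_one hrel
  have hdiff : ∀ x : F, θ x - x = (a - 1) * (if x ∈ S then σ (σ x) else x) := by
    intro x
    rw [hθ]; simp only []
    by_cases hx : x ∈ S
    · rw [if_pos hx, if_pos hx, hσ]; simp only []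
      linear_combination (x - μ * x - c) * hrel
    · rw [if_neg hx, if_neg hx]
      ring
  have hdinj : Function.Injective (fun x : F => θ x - x) := by
    intro x y hxy
    simp only [] at hxy
    rw [hdiff x, hdiff y] at hxy
    have hxy' := mul_left_cancel₀ ha1 hxy
    by_cases hx : x ∈ S <;> by_cases hy : y ∈ S
    · rw [if_pos hx, if_pos hy] at hxy'
      exact hσinj _ _ (hσinj _ _ hxy')
    · rw [if_pos hx, if_neg hy] at hxy'
      exact absurd (hxy' ▸ hσS (hσS hx)) hy
    · rw [if_neg hx, if_pos hy] at hxy'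
      exact absurd (hxy'.symm ▸ hσS (hσS hy)) hx
    · rwa [if_neg hx, if_neg hy] at hxy'
  have horth : IsOrthomorphism θ := ⟨hθbij, Finite.injective_iff_bijective.mp hdinj⟩
  -- the key singleton-fiber property at x₀ = t + 1
  have hx0S : (t + 1) ∈ S := ⟨0, by rw [pow_zero]⟩
  have hx00 : t + 1 ≠ 0 := by have := htS 0; rwa [pow_zero] at this
  have hθx0 : θ (t + 1) = a * (t + μ) := by
    rw [hθ]; simp only []
    rw [if_pos hx0S, hσ]; simp only []
    rw [hc]; ring
  have hkey : ∀ y : F, y ≠ 0 → θ y * (t + 1) = θ (t + 1) * y → y = t + 1 := by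
    intro y hy0 hEq
    rw [hθx0] at hEq
    by_cases hyS : y ∈ S
    · obtain ⟨n, rfl⟩ := hyS
      have hθy : θ (t + μ ^ n) = a * (t + μ ^ (n + 1)) := by
        rw [hθ]; simp only []
        rw [if_pos ⟨n, rfl⟩, hσval n]
      rw [hθy] at hEq
      have hE' : (t + μ ^ (n + 1)) * (t + 1) = (t + μ) * (t + μ ^ n) := by
        apply mul_left_cancel₀ ha0
        linear_combination hEq
      have hfac : t * (1 - μ) * (1 - μ ^ n) = 0 := by
        rw [pow_succ] at hE'
        linear_combination hE'
      have hμn : μ ^ n = 1 := by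
        rcases mul_eq_zero.mp hfac with h | h
        · rcases mul_eq_zero.mp h with h' | h'
          · exact absurd h' ht0
          · exact absurd h' h1μ
        · linear_combination -h
      rw [hμn]
    · have hθy : θ y = a * y := by rw [hθ]; simp only []; rw [if_neg hyS]
      rw [hθy] at hEq
      exfalso
      have h1 : y * (t + 1) = (t + μ) * y := by
        apply mul_left_cancel₀ ha0
        linear_combination hEq
      have h2 : t + 1 = t + μ := by
        apply mul_left_cancel₀ hy0
        linear_combination h1
      exact hμ1 (by linear_combination -h2)
  refine ⟨θ, cyc_top horth hθ0, ?_⟩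
  intro ℓ hlt hdvd hcyc
  have hℓ1 : 1 ≤ ℓ := by
    rcases Nat.eq_zero_or_pos ℓ with rfl | h
    · exact absurd (Nat.eq_zero_of_zero_dvd hdvd) (by omega)
    · exact h
  set h : F := (g : F) ^ ℓ with hh
  have hhne : h ≠ 0 := pow_ne_zero _ (Units.ne_zero g)
  have hne1 : h ≠ 1 := by
    intro h1
    have : (g ^ ℓ : Fˣ) = 1 := by
      apply Units.ext
      rw [Units.val_pow_eq_pow_val, Units.val_one, ← hh, h1]
    have := orderOf_dvd_of_pow_eq_one this
    rw [hog] at this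
    have := Nat.le_of_dvd (by omega) this
    omega
  have happ := hcyc.2.2 (h * (t + 1)) (t + 1) (mul_ne_zero hhne hx00) hx00
    ⟨(g : F), by rw [hh]⟩
  have := hkey (h * (t + 1)) (mul_ne_zero hhne hx00) (by linear_combination happ)
  have : h = 1 := by
    have := mul_right_cancel₀ hx00 (by rw [this, one_mul] : h * (t + 1) = 1 * (t + 1))
    exact this
  exact hne1 this

lemma lemB {F : Type*} [Field F] [Fintype F] (hq : 5 < Fintype.card F)
    (hp : (Fintype.card F - 1).Prime) :
    ∃ θ : F → F, IsLeastCycOrthomorphism (Fintype.card F - 1) θ := by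
  classical
  have hq1 : 1 < Fintype.card F := Fintype.one_lt_card
  set q := Fintype.card F with hqdef
  -- q is even, so char F = 2
  have hqeven : 2 ∣ q := by
    rcases hp.eq_two_or_odd' with h2 | hodd
    · omega
    · obtain ⟨j, hj⟩ := hodd
      omega
  have h2 : (2 : F) = 0 := by
    obtain ⟨n, hpp, hcard⟩ := FiniteField.card F (ringChar F)
    have h2p : (2 : ℕ) ∣ ringChar F :=
      Nat.prime_two.dvd_of_dvd_pow (n := (n : ℕ)) (by rw [← hcard]; exact hqeven)
    have hrc : ringChar F = 2 := ((Nat.prime_dvd_prime_iff_eq Nat.prime_two hpp).mp h2p).symm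
    haveI : CharP F 2 := hrc ▸ ringChar.charP F
    exact_mod_cast (CharP.cast_eq_zero F 2)
  obtain ⟨g, hg⟩ := IsCyclic.exists_generator (α := Fˣ)
  have hog : orderOf g = q - 1 := by
    rw [orderOf_eq_card_of_forall_mem_zpowers hg, Nat.card_eq_fintype_card,
      Fintype.card_units]
  set a : F := (g : F) with hadef
  have ha0 : a ≠ 0 := Units.ne_zero g
  have hgpow : ∀ n : ℕ, a ^ n = 1 → (q - 1) ∣ n := by
    intro n hn
    have : (g ^ n : Fˣ) = 1 := by
      apply Units.ext
      rw [Units.val_pow_eq_pow_val, Units.val_one]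
      exact hn
    rw [← hog]
    exact orderOf_dvd_of_pow_eq_one this
  have ha1 : a ≠ 1 := by
    intro h
    have := hgpow 1 (by simpa using h)
    have := Nat.le_of_dvd one_pos this
    omega
  have ha2 : a ^ 2 ≠ 1 := by
    intro h
    have := Nat.le_of_dvd two_pos (hgpow 2 h)
    omega
  have ha3 : a ^ 3 ≠ 1 := by
    intro h
    have := Nat.le_of_dvd three_pos (hgpow 3 h)
    omega
  have hA1 : a + 1 ≠ 0 := by
    intro h
    exact ha1 (by linear_combination h - h2)
  set w : F := a ^ 2 + a + 1 with hw
  have hw0 : w ≠ 0 := by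
    intro h
    exact ha3 (by linear_combination (a - 1) * h)
  -- pairwise distinctness facts
  have h1a : (1 : F) ≠ a := fun h => ha1 h.symm
  have h1a2 : (1 : F) ≠ a ^ 2 := fun h => ha2 h.symm
  have h1w : (1 : F) ≠ w := by
    intro h
    have : a * (a + 1) = 0 := by rw [hw] at h; linear_combination -h
    rcases mul_eq_zero.mp this with h' | h'
    · exact ha0 h'
    · exact hA1 h'
  have haa2 : a ≠ a ^ 2 := by
    intro h
    have : a * (a - 1) = 0 := by linear_combination -h
    rcases mul_eq_zero.mp this with h' | h'
    · exact ha0 h'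
    · exact ha1 (by linear_combination h')
  have haw : a ≠ w := by
    intro h
    exact ha2 (by rw [hw] at h; linear_combination -h - h2)
  have ha2w : a ^ 2 ≠ w := by
    intro h
    apply hA1
    rw [hw] at h
    linear_combination -h
  have h0a : (0 : F) ≠ a := fun h => ha0 h.symm
  have h0a2 : (0 : F) ≠ a ^ 2 := fun h => pow_ne_zero 2 ha0 h.symm
  have h0w : (0 : F) ≠ w := fun h => hw0 h.symm
  have h01 : (0 : F) ≠ 1 := zero_ne_one
  -- the orthomorphism
  set θ : F → F := fun x => a * (Equiv.swap (1 : F) (a ^ 2) (Equiv.swap a w x)) with hθ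
  have hθbij : Function.Bijective θ := by
    have : θ = (Equiv.swap a w).trans ((Equiv.swap (1 : F) (a ^ 2)).trans
        (Equiv.mulLeft₀ a ha0)) := by
      funext x
      simp [hθ, Equiv.mulLeft₀]
    rw [this]
    exact Equiv.bijective _
  -- values of θ
  have hθ1 : θ 1 = a ^ 3 := by
    rw [hθ]; simp only []
    rw [Equiv.swap_apply_of_ne_of_ne h1a h1w, Equiv.swap_apply_left]
    ring
  have hθa2 : θ (a ^ 2) = a := by
    rw [hθ]; simp only []
    rw [Equiv.swap_apply_of_ne_of_ne (Ne.symm haa2) ha2w, Equiv.swap_apply_right]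
    ring
  have hθa : θ a = a * w := by
    rw [hθ]; simp only []
    rw [Equiv.swap_apply_left, Equiv.swap_apply_of_ne_of_ne (Ne.symm h1w) (Ne.symm ha2w)]
  have hθw : θ w = a ^ 2 := by
    rw [hθ]; simp only []
    rw [Equiv.swap_apply_right, Equiv.swap_apply_of_ne_of_ne (Ne.symm h1a) haa2]
    ring
  have hθelse : ∀ x : F, x ≠ 1 → x ≠ a → x ≠ a ^ 2 → x ≠ w → θ x = a * x := by
    intro x hx1 hxa hxa2 hxw
    rw [hθ]; simp only []
    rw [Equiv.swap_apply_of_ne_of_ne hxa hxw, Equiv.swap_apply_of_ne_of_ne hx1 hxa2]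
  have hθ0 : θ 0 = 0 := by
    rw [hθelse 0 h01 h0a h0a2 h0w, mul_zero]
  -- the difference map
  have hdiff : ∀ x : F, θ x - x =
      (a + 1) * (Equiv.swap (1 : F) w (Equiv.swap (a ^ 2) a x)) := by
    intro x
    by_cases hx1 : x = 1
    · subst hx1
      rw [hθ1, Equiv.swap_apply_of_ne_of_ne h1a2 h1a, Equiv.swap_apply_left, hw]
      linear_combination (-(a^2) - a - 1) * h2
    · by_cases hxa2 : x = a ^ 2
      · subst hxa2
        rw [hθa2, Equiv.swap_apply_left, Equiv.swap_apply_of_ne_of_ne (Ne.symm h1a) haw]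
        linear_combination (-(a^2)) * h2
      · by_cases hxa : x = a
        · subst hxa
          rw [hθa, Equiv.swap_apply_right, Equiv.swap_apply_of_ne_of_ne (Ne.symm h1a2)
            ha2w, hw]
          ring
        · by_cases hxw : x = w
          · subst hxw
            rw [hθw, Equiv.swap_apply_of_ne_of_ne (Ne.symm ha2w) (Ne.symm haw),
              Equiv.swap_apply_right, hw]
            linear_combination (-a - 1) * h2
          · rw [hθelse x hx1 hxa hxa2 hxw,
              Equiv.swap_apply_of_ne_of_ne hxa2 hxa,
              Equiv.swap_apply_of_ne_of_ne hx1 hxw]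
            linear_combination (-x) * h2
  have hdbij : Function.Bijective (fun x : F => θ x - x) := by
    have : (fun x : F => θ x - x) = (Equiv.swap (a ^ 2) a).trans
        ((Equiv.swap (1 : F) w).trans (Equiv.mulLeft₀ (a + 1) hA1)) := by
      funext x
      simp only [Equiv.trans_apply, Equiv.coe_fn_mk, Equiv.mulLeft₀]
      rw [hdiff x]
      rfl
    rw [this]
    exact Equiv.bijective _
  have horth : IsOrthomorphism θ := ⟨hθbij, hdbij⟩
  refine ⟨θ, cyc_top horth hθ0, ?_⟩
  intro ℓ hlt hdvd hcyc
  have hℓ : ℓ = 1 := by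
    rcases (Nat.Prime.eq_one_or_self_of_dvd hp ℓ hdvd) with h | h
    · exact h
    · omega
  subst hℓ
  -- pick y outside the five special points
  obtain ⟨y, hy⟩ : ∃ y : F, y ∉ ({0, 1, a, a ^ 2, w} : Finset F) := by
    by_contra hcon
    push_neg at hcon
    have hsub : (Finset.univ : Finset F) ⊆ {0, 1, a, a ^ 2, w} := fun x _ => hcon x
    have hc := Finset.card_le_card hsub
    rw [Finset.card_univ] at hc
    have : ({0, 1, a, a ^ 2, w} : Finset F).card ≤ 5 := by
      apply le_trans (Finset.card_insert_le _ _)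
      apply Nat.succ_le_succ
      apply le_trans (Finset.card_insert_le _ _)
      apply Nat.succ_le_succ
      apply le_trans (Finset.card_insert_le _ _)
      apply Nat.succ_le_succ
      apply le_trans (Finset.card_insert_le _ _)
      apply Nat.succ_le_succ
      simp
    omega
  simp only [Finset.mem_insert, Finset.mem_singleton, not_or] at hy
  obtain ⟨hy0, hy1, hya, hya2, hyw⟩ := hy
  have happ := hcyc.2.2 1 y one_ne_zero hy0
    ⟨y⁻¹, by rw [pow_one, inv_mul_cancel₀ hy0]⟩
  rw [hθ1, hθelse y hy1 hya hya2 hyw] at happ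
  have : (a ^ 2 - 1) * (a * y) = 0 := by linear_combination happ
  rcases mul_eq_zero.mp this with h | h
  · exact ha2 (by linear_combination h)
  · exact (mul_ne_zero ha0 hy0) h

/-- Theorem 3.4.  For every prime power `q > 5` there is a non-cyclotomic
orthomorphism over `F_q`: an orthomorphism (with `θ 0 = 0`) lying in `𝒟_{q-1}(q)`,
i.e. not in `𝒞_ℓ(q)` for any `ℓ < q - 1` dividing `q - 1`. -/
theorem thm_q_minus_1 {F : Type*} [Field F] [Fintype F]
    (hq : 5 < Fintype.card F) :
    ∃ θ : F → F, IsLeastCycOrthomorphism (Fintype.card F - 1) θ := by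
  by_cases hp : (Fintype.card F - 1).Prime
  · exact lemB hq hp
  · exact lemA hq hp
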